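/- For $s \in (1/2,1)$, $n \ge 1$, $x \in [0,1)$: $\int_1^\infty \frac{r^{2s-n-3}}{(r^2-1)^s}\,{}_2F_1\big(\tfrac n2+1-s,\,2-s;\,\tfrac n2\,\big|\,\tfrac{x^2}{r^2}\big)\,dr = \frac{\Gamma(\frac n2)}{2\,\Gamma(\frac n2+1-s)\,(1-s)} \sum_{k=0}^{\infty}\frac{(\frac n2+k)\,\Gamma(2-s+k)}{\frac n2+k+1-s}\,\frac{x^{2k}}{k!}$, and consequently $\frac{\Gamma(\frac n2+1)\,\Gamma(1-s)}{2\,\Gamma(\frac n2+2-s)}(1-x^2)^{s-2} \le \int_1^\infty \frac{r^{2s-n-3}}{(r^2-1)^s}\,{}_2F_1\big(\tfrac n2+1-s,2-s;\tfrac n2\big|\tfrac{x^2}{r^2}\big)\,dr \le \frac{\Gamma(\frac n2)\,\Gamma(1-s)}{2\,\Gamma(\frac n2+1-s)}(1-x^2)^{s-2}$. -/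

import Mathlib

open Real MeasureTheory


lemma summable_gamma_pow {a y : ℝ} (ha : 0 < a) (hy0 : 0 ≤ y) (hy1 : y < 1) :
    Summable (fun k : ℕ => Real.Gamma (a + k) * y ^ k / (Nat.factorial k)) := by
  rcases eq_or_lt_of_le hy0 with h0 | hy0
  · apply summable_of_ne_finset_zero (s := {0})
    intro k hk
    simp only [Finset.mem_singleton] at hk
    simp [← h0, zero_pow hk]
  · have hpos : ∀ k : ℕ, 0 < Real.Gamma (a + k) * y ^ k / (Nat.factorial k) := by
      intro k
      have := Real.Gamma_pos_of_pos (by positivity : (0:ℝ) < a + k)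
      positivity
    apply summable_of_ratio_test_tendsto_lt_one hy1
    · exact Filter.Eventually.of_forall fun k => (hpos k).ne'
    · have h2 : Filter.Tendsto (fun k : ℕ => y * ((a + k) / (k + 1))) Filter.atTop (nhds y) := by
        have h5 : Filter.Tendsto (fun k : ℕ => ((a:ℝ) + k) / (k + 1)) Filter.atTop (nhds 1) := by
          have h3 : (fun k : ℕ => ((a:ℝ) + k) / (k + 1)) = fun k : ℕ => 1 + (a - 1) * (1 / (k+1)) := by
            funext k
            have : (k:ℝ) + 1 ≠ 0 := by positivity
            field_simp
            ring
          rw [h3]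
          have h4 := tendsto_one_div_add_atTop_nhds_zero_nat.const_mul (a - 1)
          simpa using (tendsto_const_nhds (x := (1:ℝ)) (f := Filter.atTop)).add h4
        simpa using (tendsto_const_nhds (x := y) (f := Filter.atTop)).mul h5
      refine h2.congr fun k => ?_
      have hGpos := Real.Gamma_pos_of_pos (by positivity : (0:ℝ) < a + k)
      rw [Real.norm_eq_abs, Real.norm_eq_abs, abs_of_pos (hpos (k+1)), abs_of_pos (hpos k)]
      push_cast [Nat.factorial_succ]
      rw [← add_assoc, Real.Gamma_add_one (by positivity : a + (k:ℝ) ≠ 0)]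
      have hf : (Nat.factorial k : ℝ) ≠ 0 := by positivity
      have hk1 : (k:ℝ) + 1 ≠ 0 := by positivity
      field_simp
      ring

lemma tsum_gamma_pow {a y : ℝ} (ha : 0 < a) (hy0 : 0 ≤ y) (hy1 : y < 1) :
    ∑' k : ℕ, Real.Gamma (a + k) * y ^ k / (Nat.factorial k)
      = (1 - y) ^ (-a) * Real.Gamma a := by
  set f : ℕ → ℝ → ℝ := fun k t => (Real.exp (-t) * t ^ (a - 1)) * ((t*y)^k / (Nat.factorial k))
    with hfdef
  -- integral of each term
  have hcongr : ∀ k : ℕ, ∀ t ∈ Set.Ioi (0:ℝ),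
      f k t = (Real.exp (-t) * t ^ (a + k - 1)) * (y ^ k / (Nat.factorial k)) := by
    intro k t ht
    have ht0 : (0:ℝ) < t := ht
    have : t ^ (a - 1) * t ^ (k:ℕ) = t ^ (a + k - 1) := by
      rw [← Real.rpow_natCast t k, ← Real.rpow_add ht0]
      ring_nf
    simp only [hfdef, mul_pow]
    rw [← this]
    ring
  have hint : ∀ k : ℕ, IntegrableOn (f k) (Set.Ioi 0) := by
    intro k
    apply IntegrableOn.congr_fun _ (fun t ht => (hcongr k t ht).symm) measurableSet_Ioi
    exact (Real.GammaIntegral_convergent (by positivity : (0:ℝ) < a + k)).mul_const _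
  have hval : ∀ k : ℕ, ∫ t in Set.Ioi (0:ℝ), f k t
      = Real.Gamma (a + k) * (y ^ k / (Nat.factorial k)) := by
    intro k
    rw [setIntegral_congr_fun measurableSet_Ioi (hcongr k)]
    rw [integral_mul_const, ← Real.Gamma_eq_integral (by positivity : (0:ℝ) < a + k)]
  have hnonneg : ∀ k : ℕ, ∀ t ∈ Set.Ioi (0:ℝ), 0 ≤ f k t := by
    intro k t ht
    have ht0 : (0:ℝ) < t := ht
    have h1 : (0:ℝ) ≤ t * y := by positivity
    simp only [hfdef]
    positivity
  -- swap
  have hswap : ∫ t in Set.Ioi (0:ℝ), ∑' k, f k t = ∑' k, ∫ t in Set.Ioi (0:ℝ), f k t := by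
    apply integral_tsum
    · exact fun k => (hint k).aestronglyMeasurable
    · have : ∀ k : ℕ, ∫⁻ t in Set.Ioi (0:ℝ), ‖f k t‖ₑ
          = ENNReal.ofReal (Real.Gamma (a + k) * y ^ k / (Nat.factorial k)) := by
        intro k
        rw [lintegral_congr_ae ((ae_restrict_iff' measurableSet_Ioi).2
            (Filter.Eventually.of_forall fun t ht => Real.enorm_eq_ofReal (hnonneg k t ht))),
          ← ofReal_integral_eq_lintegral_ofReal (hint k)
            ((ae_restrict_iff' measurableSet_Ioi).2 (Filter.Eventually.of_forall (hnonneg k))),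
          hval k, mul_div_assoc]
      rw [tsum_congr this, ← ENNReal.ofReal_tsum_of_nonneg]
      · exact ENNReal.ofReal_ne_top
      · intro k
        have := Real.Gamma_pos_of_pos (by positivity : (0:ℝ) < a + k)
        positivity
      · exact summable_gamma_pow ha hy0 hy1
  have hsum : ∀ t ∈ Set.Ioi (0:ℝ), ∑' k, f k t = t ^ (a-1) * Real.exp (-((1-y)*t)) := by
    intro t ht
    have ht0 : (0:ℝ) < t := ht
    rw [tsum_mul_left]
    have hexp : ∑' k : ℕ, (t*y)^k / (Nat.factorial k : ℝ) = Real.exp (t*y) := by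
      rw [Real.exp_eq_exp_ℝ, NormedSpace.exp_eq_tsum_div]
    rw [hexp]
    rw [show -((1-y)*t) = -t + t*y by ring, Real.exp_add]
    ring
  calc ∑' k : ℕ, Real.Gamma (a + k) * y ^ k / (Nat.factorial k)
      = ∑' k, ∫ t in Set.Ioi (0:ℝ), f k t := by
        refine tsum_congr fun k => ?_
        rw [hval k, mul_div_assoc]
    _ = ∫ t in Set.Ioi (0:ℝ), ∑' k, f k t := hswap.symm
    _ = ∫ t in Set.Ioi (0:ℝ), t ^ (a-1) * Real.exp (-((1-y)*t)) :=
        setIntegral_congr_fun measurableSet_Ioi hsum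
    _ = (1/(1-y)) ^ a * Real.Gamma a :=
        Real.integral_rpow_mul_exp_neg_mul_Ioi ha (by linarith)
    _ = (1 - y) ^ (-a) * Real.Gamma a := by
        rw [one_div, ← Real.rpow_neg_one (1-y), ← Real.rpow_mul (by linarith)]
        ring_nf

lemma cpow_cast_aux {u : ℝ} (h0 : 0 ≤ u) (p : ℝ) :
    (u:ℂ) ^ ((p:ℂ) - 1) = ((u ^ (p-1) : ℝ) : ℂ) := by
  rw [show ((p:ℂ) - 1) = (((p - 1 : ℝ)):ℂ) by push_cast; ring, ← Complex.ofReal_cpow h0]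

lemma beta_complex_eq_real (p q : ℝ) (hp : 0 < p) (hq : 0 < q) :
    Complex.betaIntegral p q
      = ((∫ u in (0:ℝ)..1, u ^ (p-1) * (1-u) ^ (q-1) : ℝ) : ℂ) := by
  rw [Complex.betaIntegral, ← intervalIntegral.integral_ofReal]
  apply intervalIntegral.integral_congr
  intro u hu
  rw [Set.uIcc_of_le (by norm_num : (0:ℝ) ≤ 1)] at hu
  obtain ⟨h0, h1⟩ := hu
  dsimp only
  rw [cpow_cast_aux h0, show (1 - (u:ℂ)) = (((1-u:ℝ)):ℂ) by push_cast; ring,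
    cpow_cast_aux (by linarith) q]
  push_cast
  ring

lemma integrableOn_beta (p q : ℝ) (hp : 0 < p) (hq : 0 < q) :
    IntegrableOn (fun u : ℝ => u ^ (p-1) * (1-u) ^ (q-1)) (Set.Ioo 0 1) := by
  have hc := (Complex.betaIntegral_convergent (u := p) (v := q) (by simpa) (by simpa)).1
  have hc3 : IntegrableOn
      (fun u : ℝ => ((u:ℂ) ^ ((p:ℂ)-1) * (1-(u:ℂ)) ^ ((q:ℂ)-1)).re) (Set.Ioo 0 1) :=
    (hc.mono_set Set.Ioo_subset_Ioc_self).re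
  apply hc3.congr_fun _ measurableSet_Ioo
  intro u hu
  obtain ⟨h0, h1⟩ := hu
  dsimp only
  rw [cpow_cast_aux h0.le, show (1 - (u:ℂ)) = (((1-u:ℝ)):ℂ) by push_cast; ring,
    cpow_cast_aux (by linarith) q, ← Complex.ofReal_mul, Complex.ofReal_re]

lemma integral_beta (p q : ℝ) (hp : 0 < p) (hq : 0 < q) :
    ∫ u in Set.Ioo (0:ℝ) 1, u ^ (p-1) * (1-u) ^ (q-1)
      = Real.Gamma p * Real.Gamma q / Real.Gamma (p+q) := by
  have hB := Complex.Gamma_mul_Gamma_eq_betaIntegral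
    (s := p) (t := q) (by simpa) (by simpa)
  rw [beta_complex_eq_real p q hp hq] at hB
  rw [← Complex.ofReal_add, Complex.Gamma_ofReal, Complex.Gamma_ofReal,
    Complex.Gamma_ofReal, ← Complex.ofReal_mul, ← Complex.ofReal_mul] at hB
  have hB' := Complex.ofReal_inj.mp hB
  have hG : Real.Gamma (p+q) ≠ 0 := (Real.Gamma_pos_of_pos (by linarith)).ne'
  have heq : ∫ u in (0:ℝ)..1, u ^ (p-1) * (1-u) ^ (q-1)
      = ∫ u in Set.Ioo (0:ℝ) 1, u ^ (p-1) * (1-u) ^ (q-1) := by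
    rw [intervalIntegral.integral_of_le (by norm_num : (0:ℝ) ≤ 1),
      integral_Ioc_eq_integral_Ioo]
  rw [heq] at hB'
  field_simp [hB']
  linear_combination -hB'

section subst
variable {p s : ℝ}

lemma image_aux : (fun r : ℝ => (r^2)⁻¹) '' Set.Ioi 1 = Set.Ioo 0 1 := by
  ext u
  constructor
  · rintro ⟨r, hr, rfl⟩
    have hr1 : (1:ℝ) < r := hr
    have h2 : (1:ℝ) < r^2 := by nlinarith
    exact ⟨by positivity, inv_lt_one_of_one_lt₀ h2⟩
  · rintro ⟨h0, h1⟩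
    refine ⟨(Real.sqrt u)⁻¹, ?_, ?_⟩
    · have hsp : 0 < Real.sqrt u := Real.sqrt_pos.mpr h0
      have hs1 : Real.sqrt u < 1 := by
        rw [show (1:ℝ) = Real.sqrt 1 by simp]
        exact Real.sqrt_lt_sqrt h0.le h1
      exact Set.mem_Ioi.mpr (one_lt_inv₀ hsp |>.mpr hs1)
    · show (((Real.sqrt u)⁻¹) ^ 2)⁻¹ = u
      rw [inv_pow, inv_inv, Real.sq_sqrt h0.le]

lemma deriv_aux {r : ℝ} (hr : r ∈ Set.Ioi (1:ℝ)) :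
    HasDerivWithinAt (fun r : ℝ => (r^2)⁻¹) (-(2*r) / (r^2)^2) (Set.Ioi 1) r := by
  have h1 : HasDerivAt (fun r : ℝ => r^2) (2*r) r := by
    simpa using hasDerivAt_pow 2 r
  have hr1 : (1:ℝ) < r := hr
  have := h1.inv (by positivity)
  exact this.hasDerivWithinAt

lemma inj_aux : Set.InjOn (fun r : ℝ => (r^2)⁻¹) (Set.Ioi 1) := by
  intro r1 h1 r2 h2 h
  have hr1 : (1:ℝ) < r1 := h1
  have hr2 : (1:ℝ) < r2 := h2
  have : r1^2 = r2^2 := by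
    have := inv_injective h
    simpa using this
  nlinarith [sq_nonneg (r1 - r2), sq_nonneg (r1 + r2)]

lemma pointwise_aux (hp : 0 < p) (hs0 : 0 < s) (hs1 : s < 1) {r : ℝ}
    (hr : r ∈ Set.Ioi (1:ℝ)) :
    |(-(2*r) / (r^2)^2)| • (((r^2)⁻¹) ^ (p-1) * (1-(r^2)⁻¹) ^ ((1-s)-1))
      = 2 * (r ^ (2*s-2*p-1) * (r^2-1) ^ (-s)) := by
  have hr1 : (1:ℝ) < r := hr
  have hr0 : (0:ℝ) < r := by linarith
  have ht1 : (1:ℝ) < r^2 := by nlinarith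
  have ht0 : (0:ℝ) < r^2 := by positivity
  have habs : |(-(2*r) / (r^2)^2)| = 2 * r / (r^2)^2 := by
    rw [abs_div, abs_neg, abs_of_pos (by positivity : (0:ℝ) < 2*r),
      abs_of_pos (by positivity : (0:ℝ) < (r^2)^2)]
  have h1 : ((r^2)⁻¹ : ℝ) ^ (p-1) = r ^ (-(2*(p-1))) := by
    rw [← Real.rpow_natCast r 2, ← Real.rpow_neg hr0.le, ← Real.rpow_mul hr0.le]
    norm_num
  have h2b : ((r^2:ℝ)) ^ (-s) = r ^ (2*(-s)) := by
    rw [← Real.rpow_natCast r 2, ← Real.rpow_mul hr0.le]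
    norm_num
  have he : (1-(r^2)⁻¹ : ℝ) = (r^2-1) / r^2 := by field_simp
  have h2 : ((1-(r^2)⁻¹ : ℝ)) ^ ((1-s)-1) = (r^2-1) ^ (-s) * r ^ (2*s) := by
    rw [he, Real.div_rpow (by linarith) ht0.le, show (1-s)-1 = -s by ring, h2b,
      div_eq_mul_inv, ← Real.rpow_neg hr0.le, show -(2 * -s) = 2*s by ring]
  have e1 : ((r^2)^2:ℝ) = r ^ ((4:ℝ)) := by
    rw [show ((r^2)^2:ℝ) = r^(4:ℕ) by ring, ← Real.rpow_natCast r 4]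
    norm_num
  have key4 : r ^ (2*s-2*p-1) = r / (r^2)^2 * (r ^ (-(2*(p-1))) * r ^ (2*s)) := by
    rw [e1, show 2*s-2*p-1 = (1 + -(4:ℝ)) + (-(2*(p-1)) + 2*s) by ring,
      Real.rpow_add hr0, Real.rpow_add hr0, Real.rpow_add hr0,
      Real.rpow_one, Real.rpow_neg hr0.le]
    norm_num
    ring_nf
    tauto
  rw [smul_eq_mul, habs, h1, h2]
  linear_combination (-2 * (r^2-1) ^ (-s)) * key4

lemma integral_subst (hp : 0 < p) (hs0 : 0 < s) (hs1 : s < 1) :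
    (∫ r in Set.Ioi (1:ℝ), r ^ (2*s-2*p-1) * (r^2-1) ^ (-s))
      = Real.Gamma p * Real.Gamma (1-s) / (2 * Real.Gamma (p+(1-s))) ∧
    IntegrableOn (fun r : ℝ => r ^ (2*s-2*p-1) * (r^2-1) ^ (-s)) (Set.Ioi 1) := by
  have key := integral_image_eq_integral_abs_deriv_smul measurableSet_Ioi
    (fun r hr => deriv_aux hr) inj_aux (fun u : ℝ => u ^ (p-1) * (1-u) ^ ((1-s)-1))
  rw [image_aux] at key
  have hptw : ∀ r ∈ Set.Ioi (1:ℝ),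
      |(-(2*r) / (r^2)^2)| • (((r^2)⁻¹) ^ (p-1) * (1-(r^2)⁻¹) ^ ((1-s)-1))
        = 2 * (r ^ (2*s-2*p-1) * (r^2-1) ^ (-s)) := fun r hr => pointwise_aux hp hs0 hs1 hr
  rw [setIntegral_congr_fun measurableSet_Ioi hptw, integral_beta p (1-s) hp (by linarith),
    integral_const_mul] at key
  constructor
  · have h2 : Real.Gamma (p + (1-s)) ≠ 0 := (Real.Gamma_pos_of_pos (by linarith)).ne'
    field_simp at key ⊢
    linarith [key]
  · have hib := integrableOn_beta p (1-s) hp (by linarith)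
    rw [← image_aux, integrableOn_image_iff_integrableOn_abs_deriv_smul measurableSet_Ioi
      (fun r hr => deriv_aux hr) inj_aux] at hib
    have h2 := (hib.congr_fun hptw measurableSet_Ioi).const_mul (1/2 : ℝ)
    exact IntegrableOn.congr_fun h2 (fun r hr => by ring) measurableSet_Ioi

end subst

set_option maxHeartbeats 1000000 in
theorem stmt18 (n : ℕ) (hn : 1 ≤ n) (s x : ℝ)
    (hs : s ∈ Set.Ioo (1/2 : ℝ) 1) (hx : x ∈ Set.Ico (0:ℝ) 1)
    (F : ℝ → ℝ → ℝ → ℝ → ℝ)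
    (hF : ∀ a b c z, F a b c z = Real.Gamma c / (Real.Gamma a * Real.Gamma b) *
      ∑' k : ℕ, Real.Gamma (a + k) * Real.Gamma (b + k) / Real.Gamma (c + k)
        * z ^ k / (Nat.factorial k)) :
    (∫ r in Set.Ioi (1:ℝ),
        r ^ (2*s - (n:ℝ) - 3) / (r^2 - 1) ^ s * F ((n:ℝ)/2 + 1 - s) (2 - s) ((n:ℝ)/2) (x^2/r^2))
      = Real.Gamma ((n:ℝ)/2) / (2 * Real.Gamma ((n:ℝ)/2 + 1 - s) * (1 - s)) *
          ∑' k : ℕ, ((n:ℝ)/2 + k) * Real.Gamma (2 - s + k) / ((n:ℝ)/2 + k + 1 - s)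
            * x ^ (2*k) / (Nat.factorial k) ∧
    Real.Gamma ((n:ℝ)/2 + 1) * Real.Gamma (1 - s) / (2 * Real.Gamma ((n:ℝ)/2 + 2 - s))
        * (1 - x^2) ^ (s - 2)
      ≤ (∫ r in Set.Ioi (1:ℝ),
          r ^ (2*s - (n:ℝ) - 3) / (r^2 - 1) ^ s
            * F ((n:ℝ)/2 + 1 - s) (2 - s) ((n:ℝ)/2) (x^2/r^2)) ∧
    (∫ r in Set.Ioi (1:ℝ),
        r ^ (2*s - (n:ℝ) - 3) / (r^2 - 1) ^ s * F ((n:ℝ)/2 + 1 - s) (2 - s) ((n:ℝ)/2) (x^2/r^2))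
      ≤ Real.Gamma ((n:ℝ)/2) * Real.Gamma (1 - s) / (2 * Real.Gamma ((n:ℝ)/2 + 1 - s))
          * (1 - x^2) ^ (s - 2) := by
  obtain ⟨hs2, hs1⟩ := hs
  obtain ⟨hx0, hx1⟩ := hx
  have hs0 : (0:ℝ) < s := by linarith
  have h1s : (0:ℝ) < 1 - s := by linarith
  have hn' : (0:ℝ) < n := by exact_mod_cast hn
  have hN : (0:ℝ) < (n:ℝ)/2 := by linarith
  have hx2 : x^2 < 1 := by nlinarith
  have hx20 : (0:ℝ) ≤ x^2 := by positivity
  -- Gamma positivity facts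
  have hGN : 0 < Real.Gamma ((n:ℝ)/2) := Real.Gamma_pos_of_pos hN
  have hGA : 0 < Real.Gamma ((n:ℝ)/2 + 1 - s) := Real.Gamma_pos_of_pos (by linarith)
  have hGB : 0 < Real.Gamma (2 - s) := Real.Gamma_pos_of_pos (by linarith)
  have hG1s : 0 < Real.Gamma (1 - s) := Real.Gamma_pos_of_pos h1s
  -- abbreviations (as plain terms)
  have hkc : ∀ k : ℕ, (0:ℝ) ≤ k := fun k => Nat.cast_nonneg k
  have hGBk : ∀ k : ℕ, 0 < Real.Gamma (2 - s + k) :=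
    fun k => Real.Gamma_pos_of_pos (by have := hkc k; linarith)
  have hGAk : ∀ k : ℕ, 0 < Real.Gamma ((n:ℝ)/2 + 1 - s + k) :=
    fun k => Real.Gamma_pos_of_pos (by have := hkc k; linarith)
  have hGNk : ∀ k : ℕ, 0 < Real.Gamma ((n:ℝ)/2 + k) :=
    fun k => Real.Gamma_pos_of_pos (by positivity)
  -- the termwise functions
  set c0 : ℝ := Real.Gamma ((n:ℝ)/2) / (Real.Gamma ((n:ℝ)/2 + 1 - s) * Real.Gamma (2 - s))
    with hc0
  have hc0pos : 0 < c0 := by rw [hc0]; positivity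
  set h : ℕ → ℝ → ℝ := fun k r =>
    (c0 * (Real.Gamma ((n:ℝ)/2 + 1 - s + k) * Real.Gamma (2 - s + k)
        / Real.Gamma ((n:ℝ)/2 + k)) * x ^ (2*k) / (Nat.factorial k))
      * (r ^ (2*s - 2*((n:ℝ)/2 + 1 + k) - 1) * (r^2 - 1) ^ (-s)) with hhdef
  have hCpos : ∀ k : ℕ, 0 ≤ c0 * (Real.Gamma ((n:ℝ)/2 + 1 - s + k) * Real.Gamma (2 - s + k)
      / Real.Gamma ((n:ℝ)/2 + k)) * x ^ (2*k) / (Nat.factorial k) := by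
    intro k
    have h1 := hGAk k; have h2 := hGBk k; have h3 := hGNk k
    positivity
  -- pointwise expansion of the integrand
  have hIr : ∀ r ∈ Set.Ioi (1:ℝ),
      r ^ (2*s - (n:ℝ) - 3) / (r^2 - 1) ^ s * F ((n:ℝ)/2 + 1 - s) (2 - s) ((n:ℝ)/2) (x^2/r^2)
        = ∑' k, h k r := by
    intro r hr
    have hr1 : (1:ℝ) < r := hr
    have hr0 : (0:ℝ) < r := by linarith
    have hsq : (0:ℝ) < r^2 - 1 := by nlinarith
    rw [hF, ← tsum_mul_left, ← tsum_mul_left]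
    refine tsum_congr fun k => ?_
    rw [hhdef]
    have hz : (x^2/r^2)^k = x ^ (2*k) * ((r ^ (2*k) : ℝ))⁻¹ := by
      rw [div_pow, ← pow_mul, ← pow_mul, div_eq_mul_inv]
    have hmerge : r ^ (2*s - (n:ℝ) - 3) * ((r ^ (2*k) : ℝ))⁻¹
        = r ^ (2*s - 2*((n:ℝ)/2 + 1 + k) - 1) := by
      rw [← Real.rpow_natCast r (2*k), ← Real.rpow_neg hr0.le, ← Real.rpow_add hr0]
      congr 1
      push_cast
      ring
    have hinv : ((r^2 - 1 : ℝ) ^ s)⁻¹ = (r^2 - 1) ^ (-s) := (Real.rpow_neg hsq.le s).symm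
    rw [div_eq_mul_inv, hinv, hz]
    linear_combination (c0 * (Real.Gamma ((n:ℝ)/2 + 1 - s + k) * Real.Gamma (2 - s + k)
      / Real.Gamma ((n:ℝ)/2 + k)) * x ^ (2*k) / (Nat.factorial k : ℝ)
      * ((r^2-1) ^ (-s))) * hmerge
  -- per-term integral values
  have hIk : ∀ k : ℕ, ∫ r in Set.Ioi (1:ℝ), h k r
      = Real.Gamma ((n:ℝ)/2) / (2 * Real.Gamma ((n:ℝ)/2 + 1 - s) * (1 - s)) *
          (((n:ℝ)/2 + k) * Real.Gamma (2 - s + k) / ((n:ℝ)/2 + k + 1 - s)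
            * x ^ (2*k) / (Nat.factorial k)) := by
    intro k
    rw [hhdef]
    rw [integral_const_mul, (integral_subst (p := (n:ℝ)/2 + 1 + k) (by positivity) hs0 hs1).1]
    have hg1 : Real.Gamma ((n:ℝ)/2 + 1 + k)
        = ((n:ℝ)/2 + k) * Real.Gamma ((n:ℝ)/2 + k) := by
      rw [show (n:ℝ)/2 + 1 + (k:ℝ) = ((n:ℝ)/2 + k) + 1 by ring,
        Real.Gamma_add_one (by have := hkc k; intro hcon; nlinarith)]
    have hg2 : Real.Gamma ((n:ℝ)/2 + 1 + k + (1 - s))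
        = ((n:ℝ)/2 + 1 - s + k) * Real.Gamma ((n:ℝ)/2 + 1 - s + k) := by
      rw [show (n:ℝ)/2 + 1 + (k:ℝ) + (1-s) = ((n:ℝ)/2 + 1 - s + k) + 1 by ring,
        Real.Gamma_add_one (by have := hkc k; intro hcon; nlinarith)]
    have hg3 : Real.Gamma (2 - s) = (1 - s) * Real.Gamma (1 - s) := by
      rw [show (2 - s : ℝ) = (1 - s) + 1 by ring, Real.Gamma_add_one h1s.ne']
    rw [hg1, hg2, hc0, hg3,
      show (n:ℝ)/2 + (k:ℝ) + 1 - s = (n:ℝ)/2 + 1 - s + (k:ℝ) from by ring]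
    have hf : (Nat.factorial k : ℝ) ≠ 0 := by positivity
    have h1 := (hGAk k).ne'
    have h2 := (hGNk k).ne'
    have h3 : ((n:ℝ)/2 + 1 - s + (k:ℝ)) ≠ 0 := by have := hkc k; intro hcon; nlinarith
    have h5 : ((n:ℝ)/2 + (k:ℝ)) ≠ 0 := by have := hkc k; intro hcon; nlinarith
    have h6 := hGA.ne'
    have h7 := hG1s.ne'
    have h8 := h1s.ne'
    generalize hq1 : Real.Gamma ((n:ℝ)/2 + 1 - s + (k:ℝ)) = gAk at h1 ⊢
    generalize hq2 : Real.Gamma (2 - s + (k:ℝ)) = gBk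
    generalize hq3 : Real.Gamma ((n:ℝ)/2 + (k:ℝ)) = gNk at h2 ⊢
    generalize hq4 : Real.Gamma ((n:ℝ)/2 + 1 - s) = gA at h6 ⊢
    generalize hq5 : Real.Gamma (1 - s) = g1s at h7 ⊢
    generalize hq6 : ((n:ℝ)/2 + 1 - s + (k:ℝ)) = Ak at h3 ⊢
    generalize hq7 : ((n:ℝ)/2 + (k:ℝ)) = Nk at h5 ⊢
    generalize hq8 : ((Nat.factorial k : ℝ)) = fk at hf ⊢
    generalize hq9 : (1 - s) = t at h8 ⊢
    field_simp
  -- summability of the target series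
  have hGs : Summable (fun k : ℕ => Real.Gamma (2 - s + k) * (x^2) ^ k / (Nat.factorial k)) :=
    summable_gamma_pow (by linarith) hx20 hx2
  have hd_eq : ∀ k : ℕ, ((n:ℝ)/2 + k) * Real.Gamma (2 - s + k) / ((n:ℝ)/2 + k + 1 - s)
      * x ^ (2*k) / (Nat.factorial k)
      = (((n:ℝ)/2 + k) / ((n:ℝ)/2 + k + 1 - s))
        * (Real.Gamma (2 - s + k) * (x^2) ^ k / (Nat.factorial k)) := by
    intro k
    rw [← pow_mul]
    ring
  have hratio_le : ∀ k : ℕ, ((n:ℝ)/2 + k) / ((n:ℝ)/2 + k + 1 - s) ≤ 1 := by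
    intro k
    have hpos : (0:ℝ) < (n:ℝ)/2 + k + 1 - s := by have := hkc k; linarith
    rw [div_le_one hpos]
    linarith
  have hratio_ge : ∀ k : ℕ, ((n:ℝ)/2) / ((n:ℝ)/2 + 1 - s)
      ≤ ((n:ℝ)/2 + k) / ((n:ℝ)/2 + k + 1 - s) := by
    intro k
    have hk0 : (0:ℝ) ≤ k := Nat.cast_nonneg k
    rw [div_le_div_iff₀ (by linarith) (by linarith)]
    nlinarith
  have hGk_nonneg : ∀ k : ℕ, 0 ≤ Real.Gamma (2 - s + k) * (x^2) ^ k / (Nat.factorial k) := by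
    intro k
    have := hGBk k
    positivity
  have hd_nonneg : ∀ k : ℕ, 0 ≤ ((n:ℝ)/2 + k) * Real.Gamma (2 - s + k)
      / ((n:ℝ)/2 + k + 1 - s) * x ^ (2*k) / (Nat.factorial k) := by
    intro k
    rw [hd_eq k]
    have h5 : 0 ≤ ((n:ℝ)/2 + k) / ((n:ℝ)/2 + k + 1 - s) :=
      div_nonneg (by have := hkc k; linarith) (by have := hkc k; linarith)
    exact mul_nonneg h5 (hGk_nonneg k)
  have hd_le : ∀ k : ℕ, ((n:ℝ)/2 + k) * Real.Gamma (2 - s + k) / ((n:ℝ)/2 + k + 1 - s)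
      * x ^ (2*k) / (Nat.factorial k)
      ≤ Real.Gamma (2 - s + k) * (x^2) ^ k / (Nat.factorial k) := by
    intro k
    rw [hd_eq k]
    calc (((n:ℝ)/2 + k) / ((n:ℝ)/2 + k + 1 - s))
          * (Real.Gamma (2 - s + k) * (x^2) ^ k / (Nat.factorial k))
        ≤ 1 * (Real.Gamma (2 - s + k) * (x^2) ^ k / (Nat.factorial k)) :=
          mul_le_mul_of_nonneg_right (hratio_le k) (hGk_nonneg k)
      _ = _ := one_mul _
  have hds : Summable (fun k : ℕ => ((n:ℝ)/2 + k) * Real.Gamma (2 - s + k)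
      / ((n:ℝ)/2 + k + 1 - s) * x ^ (2*k) / (Nat.factorial k)) :=
    Summable.of_nonneg_of_le hd_nonneg hd_le hGs
  -- integrability of each h k
  have hint : ∀ k : ℕ, IntegrableOn (h k) (Set.Ioi 1) := by
    intro k
    rw [hhdef]
    exact ((integral_subst (p := (n:ℝ)/2 + 1 + k) (by positivity) hs0 hs1).2).const_mul _
  have hnonneg : ∀ k : ℕ, ∀ r ∈ Set.Ioi (1:ℝ), 0 ≤ h k r := by
    intro k r hr
    have hr1 : (1:ℝ) < r := hr
    have hr0 : (0:ℝ) < r := by linarith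
    have hsq : (0:ℝ) < r^2 - 1 := by nlinarith
    rw [hhdef]
    have := hCpos k
    have h6 : (0:ℝ) ≤ r ^ (2*s - 2*((n:ℝ)/2 + 1 + k) - 1) * (r^2 - 1) ^ (-s) :=
      mul_nonneg (Real.rpow_nonneg hr0.le _) (Real.rpow_nonneg hsq.le _)
    exact mul_nonneg this h6
  have hswap : ∫ r in Set.Ioi (1:ℝ), ∑' k, h k r = ∑' k, ∫ r in Set.Ioi (1:ℝ), h k r := by
    apply integral_tsum
    · exact fun k => (hint k).aestronglyMeasurable
    · have hlin : ∀ k : ℕ, ∫⁻ r in Set.Ioi (1:ℝ), ‖h k r‖ₑ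
          = ENNReal.ofReal (Real.Gamma ((n:ℝ)/2) / (2 * Real.Gamma ((n:ℝ)/2 + 1 - s) * (1 - s)) *
            (((n:ℝ)/2 + k) * Real.Gamma (2 - s + k) / ((n:ℝ)/2 + k + 1 - s)
              * x ^ (2*k) / (Nat.factorial k))) := by
        intro k
        rw [lintegral_congr_ae ((ae_restrict_iff' measurableSet_Ioi).2
            (Filter.Eventually.of_forall fun r hr => Real.enorm_eq_ofReal (hnonneg k r hr))),
          ← ofReal_integral_eq_lintegral_ofReal (hint k)
            ((ae_restrict_iff' measurableSet_Ioi).2 (Filter.Eventually.of_forall (hnonneg k))),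
          hIk k]
      rw [tsum_congr hlin, ← ENNReal.ofReal_tsum_of_nonneg]
      · exact ENNReal.ofReal_ne_top
      · intro k
        have := hd_nonneg k
        positivity
      · exact hds.mul_left _
  -- the main equality
  have hmain : (∫ r in Set.Ioi (1:ℝ),
      r ^ (2*s - (n:ℝ) - 3) / (r^2 - 1) ^ s * F ((n:ℝ)/2 + 1 - s) (2 - s) ((n:ℝ)/2) (x^2/r^2))
      = Real.Gamma ((n:ℝ)/2) / (2 * Real.Gamma ((n:ℝ)/2 + 1 - s) * (1 - s)) *
          ∑' k : ℕ, ((n:ℝ)/2 + k) * Real.Gamma (2 - s + k) / ((n:ℝ)/2 + k + 1 - s)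
            * x ^ (2*k) / (Nat.factorial k) := by
    rw [setIntegral_congr_fun measurableSet_Ioi hIr, hswap, tsum_congr hIk, tsum_mul_left]
  -- bounds on the series
  have hGsum : ∑' k : ℕ, Real.Gamma (2 - s + k) * (x^2) ^ k / (Nat.factorial k)
      = (1 - x^2) ^ (s - 2) * Real.Gamma (2 - s) := by
    rw [tsum_gamma_pow (by linarith : (0:ℝ) < 2 - s) hx20 hx2, show -(2-s) = s - 2 by ring]
  have hTle : ∑' k : ℕ, ((n:ℝ)/2 + k) * Real.Gamma (2 - s + k) / ((n:ℝ)/2 + k + 1 - s)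
      * x ^ (2*k) / (Nat.factorial k) ≤ (1 - x^2) ^ (s - 2) * Real.Gamma (2 - s) := by
    rw [← hGsum]
    exact Summable.tsum_le_tsum hd_le hds hGs
  have hTge : ((n:ℝ)/2) / ((n:ℝ)/2 + 1 - s) * ((1 - x^2) ^ (s - 2) * Real.Gamma (2 - s))
      ≤ ∑' k : ℕ, ((n:ℝ)/2 + k) * Real.Gamma (2 - s + k) / ((n:ℝ)/2 + k + 1 - s)
        * x ^ (2*k) / (Nat.factorial k) := by
    rw [← hGsum, ← tsum_mul_left]
    refine Summable.tsum_le_tsum (fun k => ?_) (hGs.mul_left _) hds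
    rw [hd_eq k]
    exact mul_le_mul_of_nonneg_right (hratio_ge k) (hGk_nonneg k)
  have hg3 : Real.Gamma (2 - s) = (1 - s) * Real.Gamma (1 - s) := by
    rw [show (2 - s : ℝ) = (1 - s) + 1 by ring, Real.Gamma_add_one h1s.ne']
  have hDpos : 0 < Real.Gamma ((n:ℝ)/2) / (2 * Real.Gamma ((n:ℝ)/2 + 1 - s) * (1 - s)) := by
    positivity
  refine ⟨hmain, ?_, ?_⟩
  · rw [hmain]
    have e_low : Real.Gamma ((n:ℝ)/2 + 1) * Real.Gamma (1 - s)
        / (2 * Real.Gamma ((n:ℝ)/2 + 2 - s)) * (1 - x^2) ^ (s - 2)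
        = Real.Gamma ((n:ℝ)/2) / (2 * Real.Gamma ((n:ℝ)/2 + 1 - s) * (1 - s)) *
          (((n:ℝ)/2) / ((n:ℝ)/2 + 1 - s) * ((1 - x^2) ^ (s - 2) * Real.Gamma (2 - s))) := by
      rw [show (n:ℝ)/2 + 1 = ((n:ℝ)/2) + 1 by ring, Real.Gamma_add_one hN.ne',
        show (n:ℝ)/2 + 2 - s = ((n:ℝ)/2 + 1 - s) + 1 by ring,
        Real.Gamma_add_one (by intro hcon; nlinarith), hg3]
      have h7 : ((n:ℝ)/2 + 1 - s) ≠ 0 := by intro hcon; nlinarith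
      have h6 := hGA.ne'
      have h8 := hG1s.ne'
      have h9 := hGN.ne'
      have h10 := h1s.ne'
      generalize hq4 : Real.Gamma ((n:ℝ)/2 + 1 - s) = gA at h6 ⊢
      generalize hq5 : Real.Gamma (1 - s) = g1s at h8 ⊢
      generalize hq6 : Real.Gamma ((n:ℝ)/2) = gN at h9 ⊢
      generalize hq7 : ((1 - x^2 : ℝ) ^ (s - 2)) = P
      generalize hq8 : ((n:ℝ)/2 + 1 - s) = A at h7 ⊢
      generalize hq9 : (1 - s) = t at h10 ⊢
      field_simp
    rw [e_low]
    exact mul_le_mul_of_nonneg_left hTge hDpos.le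
  · rw [hmain]
    have e_up : Real.Gamma ((n:ℝ)/2) * Real.Gamma (1 - s)
        / (2 * Real.Gamma ((n:ℝ)/2 + 1 - s)) * (1 - x^2) ^ (s - 2)
        = Real.Gamma ((n:ℝ)/2) / (2 * Real.Gamma ((n:ℝ)/2 + 1 - s) * (1 - s)) *
          ((1 - x^2) ^ (s - 2) * Real.Gamma (2 - s)) := by
      rw [hg3]
      have h6 := hGA.ne'
      have h8 := hG1s.ne'
      have h10 := h1s.ne'
      generalize hq4 : Real.Gamma ((n:ℝ)/2 + 1 - s) = gA at h6 ⊢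
      generalize hq5 : Real.Gamma (1 - s) = g1s at h8 ⊢
      generalize hq6 : Real.Gamma ((n:ℝ)/2) = gN
      generalize hq7 : ((1 - x^2 : ℝ) ^ (s - 2)) = P
      generalize hq9 : (1 - s) = t at h10 ⊢
      field_simp
    rw [e_up]
    exact mul_le_mul_of_nonneg_left hTle hDpos.le
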